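/- Let H' be a bipartite graph such that its 1-subdivision H = T_1(H') is cubical. Then ex(Q_n, H) = o(n·2^{n-1}); that is, for every constant c > 0, for all sufficiently large n, every subgraph of Q_n with at least c·n·2^{n-1} edges contains a subgraph isomorphic to T_1(H'). -/

import Mathlib

open SimpleGraph

/-- The hypercube graph `Q_n`. -/
def hypercube (n : ℕ) : SimpleGraph (Finset (Fin n)) where
  Adj A B := (A ⊆ B ∧ B.card = A.card + 1) ∨ (B ⊆ A ∧ A.card = B.card + 1)
  symm := ⟨fun A B h => h.symm⟩
  loopless := by
    refine ⟨fun A h => ?_⟩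
    rcases h with ⟨-, h⟩ | ⟨-, h⟩ <;> omega

/-- `G` contains a copy of `H`, i.e. `H` is isomorphic to a subgraph of `G`. -/
def ContainsCopy {α β : Type*} (G : SimpleGraph α) (H : SimpleGraph β) : Prop :=
  ∃ f : β → α, Function.Injective f ∧ ∀ u v, H.Adj u v → G.Adj (f u) (f v)

/-- A graph is cubical if it is isomorphic to a subgraph of a hypercube. -/
def IsCubical {V : Type*} (G : SimpleGraph V) : Prop :=
  ∃ n : ℕ, ContainsCopy (hypercube n) G

/-- The number of edges of a graph. -/
noncomputable def numEdges {V : Type*} (G : SimpleGraph V) : ℕ := Nat.card G.edgeSet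

/-- The 1-subdivision `T₁(G)` of a graph `G`: each edge is replaced by a path with one new
internal vertex. -/
def oneSubdivision {V : Type*} (G : SimpleGraph V) : SimpleGraph (V ⊕ G.edgeSet) :=
  SimpleGraph.fromRel (fun x y =>
    match x, y with
    | Sum.inl v, Sum.inr e => v ∈ (e : Sym2 V)
    | _, _ => False)

open Finset
open scoped Classical

namespace ExOneSub

variable {n : ℕ}
def lam (G : SimpleGraph (Finset (Fin n))) (A : Finset (Fin n)) (x y : Fin n) : Prop :=
  x ≠ y ∧ G.Adj (insert x A) (insert x (insert y A)) ∧
    G.Adj (insert y A) (insert x (insert y A))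

lemma lam_symm {G : SimpleGraph (Finset (Fin n))} {A : Finset (Fin n)} {x y : Fin n}
    (h : lam G A x y) : lam G A y x := by
  obtain ⟨hne, h1, h2⟩ := h
  refine ⟨hne.symm, ?_, ?_⟩ <;> rw [Finset.insert_comm y x A]
  exacts [h2, h1]

lemma lam_not_mem_left {G : SimpleGraph (Finset (Fin n))} {A : Finset (Fin n)} {x y : Fin n}
    (h : lam G A x y) : x ∉ A := by
  intro hx
  obtain ⟨hne, h1, h2⟩ := h
  have : insert x (insert y A) = insert y A := by
    rw [Finset.insert_comm x y A, Finset.insert_eq_self.2 hx]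
  rw [this] at h2
  exact G.irrefl h2

lemma lam_not_mem_right {G : SimpleGraph (Finset (Fin n))} {A : Finset (Fin n)} {x y : Fin n}
    (h : lam G A x y) : y ∉ A := lam_not_mem_left (lam_symm h)

/-- Down-neighborhood elements of `C` : those `z ∈ C` with the edge `(C \ z, C)` in `G`. -/
noncomputable def DD (G : SimpleGraph (Finset (Fin n))) (C : Finset (Fin n)) : Finset (Fin n) :=
  C.filter (fun z => G.Adj (C.erase z) C)

lemma numEdges_eq_card_edgeFinset (G : SimpleGraph (Finset (Fin n))) :
    numEdges G = G.edgeFinset.card := by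
  rw [numEdges, ← SimpleGraph.coe_edgeFinset, Nat.card_coe_set_eq, Set.ncard_coe_finset]

lemma card_edgeFinset_le_sum_DD (G : SimpleGraph (Finset (Fin n))) (hG : G ≤ hypercube n) :
    G.edgeFinset.card ≤ ∑ C : Finset (Fin n), (DD G C).card := by
  rw [← Finset.card_sigma Finset.univ (fun C => DD G C)]
  apply Finset.card_le_card_of_surjOn
    (fun p : (_ : Finset (Fin n)) × Fin n => s(p.1.erase p.2, p.1))
  intro e he
  simp only [Finset.mem_coe, SimpleGraph.mem_edgeFinset] at he
  induction e using Sym2.ind with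
  | _ X Y =>
    have hadj : G.Adj X Y := (SimpleGraph.mem_edgeSet G).mp he
    have hxy : X ≠ Y := hadj.ne
    rcases (show (X ⊆ Y ∧ Y.card = X.card + 1) ∨ (Y ⊆ X ∧ X.card = Y.card + 1) from hG hadj) with ⟨hsub, hcard⟩ | ⟨hsub, hcard⟩
    · -- X ⊂ Y
      obtain ⟨z, hzY, hzX⟩ := Finset.exists_of_ssubset (hsub.ssubset_of_ne hxy)
      have hXe : X = Y.erase z := by
        apply Finset.eq_of_subset_of_card_le (Finset.subset_erase.2 ⟨hsub, hzX⟩)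
        rw [Finset.card_erase_of_mem hzY]
        omega
      refine ⟨⟨Y, z⟩, ?_, ?_⟩
      · simp only [Finset.mem_coe, Finset.mem_sigma, Finset.mem_univ, true_and, DD,
          Finset.mem_filter]
        exact ⟨hzY, by rw [← hXe]; exact hadj⟩
      · simp only [← hXe]
    · -- Y ⊂ X
      obtain ⟨z, hzX, hzY⟩ := Finset.exists_of_ssubset (hsub.ssubset_of_ne hxy.symm)
      have hYe : Y = X.erase z := by
        apply Finset.eq_of_subset_of_card_le (Finset.subset_erase.2 ⟨hsub, hzY⟩)
        rw [Finset.card_erase_of_mem hzX]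
        omega
      refine ⟨⟨X, z⟩, ?_, ?_⟩
      · simp only [Finset.mem_coe, Finset.mem_sigma, Finset.mem_univ, true_and, DD,
          Finset.mem_filter]
        exact ⟨hzX, by rw [← hYe]; exact hadj.symm⟩
      · simp only [← hYe, Sym2.eq_swap]


/-- ordered pairs supported by `A` -/
noncomputable def lamPairs (G : SimpleGraph (Finset (Fin n))) (A : Finset (Fin n)) :
    Finset (Fin n × Fin n) :=
  (Finset.univ ×ˢ Finset.univ).filter (fun p => lam G A p.1 p.2)

lemma sum_offDiag_le_sum_lamPairs (G : SimpleGraph (Finset (Fin n))) :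
    ∑ C : Finset (Fin n), (DD G C).offDiag.card ≤
      ∑ A : Finset (Fin n), (lamPairs G A).card := by
  rw [← Finset.card_sigma Finset.univ (fun C => (DD G C).offDiag),
      ← Finset.card_sigma Finset.univ (fun A => lamPairs G A)]
  apply Finset.card_le_card_of_surjOn
    (fun p : (_ : Finset (Fin n)) × (Fin n × Fin n) =>
      (⟨insert p.2.1 (insert p.2.2 p.1), p.2⟩ : (_ : Finset (Fin n)) × (Fin n × Fin n)))
  rintro ⟨C, x, y⟩ hmem
  simp only [Finset.mem_coe, Finset.mem_sigma, Finset.mem_univ, true_and,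
    Finset.mem_offDiag, DD, Finset.mem_filter] at hmem
  obtain ⟨⟨hxC, hax⟩, ⟨hyC, hay⟩, hne⟩ := hmem
  set A := (C.erase x).erase y with hA
  have hyCx : y ∈ C.erase x := Finset.mem_erase.2 ⟨hne.symm, hyC⟩
  have hiy : insert y A = C.erase x := Finset.insert_erase hyCx
  have hix : insert x (insert y A) = C := by rw [hiy]; exact Finset.insert_erase hxC
  have hxCy : x ∈ C.erase y := Finset.mem_erase.2 ⟨hne, hxC⟩
  have hixA : insert x A = C.erase y := by
    rw [hA, Finset.erase_right_comm]
    exact Finset.insert_erase hxCy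
  refine ⟨⟨A, (x, y)⟩, ?_, by simp only [hix]⟩
  simp only [Finset.mem_coe, Finset.mem_sigma, Finset.mem_univ, true_and, lamPairs,
    Finset.mem_filter, Finset.mem_product, and_true, and_self]
  exact ⟨hne, by rw [hixA, hix]; exact hay, by rw [hiy, Finset.insert_erase hxC]; exact hax⟩

/-- neighborhood of `x` in the support relation -/
noncomputable def nbr (G : SimpleGraph (Finset (Fin n))) (A : Finset (Fin n)) (x : Fin n) :
    Finset (Fin n) :=
  Finset.univ.filter (fun y => lam G A x y)

lemma lamPairs_card_le_sum_nbr (G : SimpleGraph (Finset (Fin n))) (A : Finset (Fin n)) :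
    (lamPairs G A).card ≤ ∑ x : Fin n, (nbr G A x).card := by
  rw [← Finset.card_sigma Finset.univ (fun x => nbr G A x)]
  apply Finset.card_le_card_of_surjOn (fun p : (_ : Fin n) × Fin n => (p.1, p.2))
  rintro ⟨x, y⟩ hmem
  simp only [Finset.mem_coe, lamPairs, Finset.mem_filter, Finset.mem_product] at hmem
  exact ⟨⟨x, y⟩, by simp [nbr, hmem.2], rfl⟩

/-- generic pigeonhole bound -/
lemma sum_le_filter_bound {ι : Type*} [Fintype ι] (F : ι → ℕ) (b K : ℕ) (hb : ∀ i, F i ≤ b) :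
    ∑ i, F i ≤ (Finset.univ.filter (fun i => K < F i)).card * b + Fintype.card ι * K := by
  classical
  rw [← Finset.sum_filter_add_sum_filter_not Finset.univ (fun i => K < F i) F]
  have h1 : ∑ i ∈ Finset.univ.filter (fun i => K < F i), F i ≤
      (Finset.univ.filter (fun i => K < F i)).card * b := by
    simpa [mul_comm] using Finset.sum_le_card_nsmul _ F b (fun x _ => hb x)
  have h2 : ∑ i ∈ Finset.univ.filter (fun i => ¬ K < F i), F i ≤ Fintype.card ι * K := by
    calc ∑ i ∈ Finset.univ.filter (fun i => ¬ K < F i), F i ≤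
        (Finset.univ.filter (fun i => ¬ K < F i)).card * K := by
          simpa [mul_comm] using Finset.sum_le_card_nsmul _ F K
            (fun x hx => by simpa using (Finset.mem_filter.1 hx).2)
      _ ≤ Fintype.card ι * K := by
          exact Nat.mul_le_mul_right K (le_of_le_of_eq (Finset.card_filter_le _ _) Finset.card_univ)
  omega

lemma pow_le_descFactorial : ∀ (t m : ℕ), (m + 1 - t) ^ t ≤ m.descFactorial t := by
  intro t
  induction t with
  | zero => intro m; simp
  | succ t ih =>
    intro m
    rw [Nat.descFactorial_succ]
    calc (m + 1 - (t + 1)) ^ (t + 1) = (m - t) * (m - t) ^ t := by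
          rw [show m + 1 - (t + 1) = m - t from by omega, pow_succ, mul_comm]
      _ ≤ (m - t) * m.descFactorial t :=
          Nat.mul_le_mul_left _ (le_trans (Nat.pow_le_pow_left (by omega) t) (ih m))


lemma kst_aux {n : ℕ} (R : Fin n → Fin n → Prop) (t K₂ : ℕ)
    (h : 2 * t * n.choose t <
      (Finset.univ.filter
          (fun x => K₂ < (Finset.univ.filter (fun y => R x y)).card)).card *
        (K₂ + 1).choose t) :
    ∃ S U : Finset (Fin n), S.card = t ∧ U.card = t ∧ Disjoint S U ∧
      ∀ x ∈ S, ∀ y ∈ U, R x y := by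
  classical
  set nb : Fin n → Finset (Fin n) := fun x => Finset.univ.filter (fun y => R x y) with hnb
  set Big := Finset.univ.filter (fun x => K₂ < (nb x).card) with hBig
  set PT := Big.sigma (fun x => (nb x).powersetCard t) with hPT
  have hPTcard : Big.card * (K₂ + 1).choose t ≤ PT.card := by
    rw [hPT, Finset.card_sigma]
    calc Big.card * (K₂ + 1).choose t = Big.card • ((K₂ + 1).choose t) := by
          simp [smul_eq_mul]
      _ ≤ ∑ x ∈ Big, ((nb x).powersetCard t).card := by
          apply Finset.card_nsmul_le_sum
          intro x hx
          rw [Finset.card_powersetCard]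
          exact Nat.choose_le_choose t (Finset.mem_filter.1 hx).2
  have hfib : ∃ T₀ ∈ Finset.powersetCard t (Finset.univ : Finset (Fin n)),
      2 * t < (PT.filter (fun p => p.2 = T₀)).card := by
    by_contra hcon
    push_neg at hcon
    have hmaps : ∀ p ∈ PT, p.2 ∈ Finset.powersetCard t (Finset.univ : Finset (Fin n)) := by
      rintro ⟨x, T⟩ hp
      rw [hPT, Finset.mem_sigma] at hp
      rw [Finset.mem_powersetCard] at hp ⊢
      exact ⟨Finset.subset_univ _, hp.2.2⟩
    have heq := Finset.card_eq_sum_card_fiberwise hmaps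
    have hle : PT.card ≤ (Finset.powersetCard t (Finset.univ : Finset (Fin n))).card * (2 * t) := by
      rw [heq]
      simpa [smul_eq_mul] using
        Finset.sum_le_card_nsmul (Finset.powersetCard t (Finset.univ : Finset (Fin n)))
          _ (2 * t) (fun T hT => hcon T hT)
    rw [Finset.card_powersetCard, Finset.card_univ, Fintype.card_fin] at hle
    have : Big.card * (K₂ + 1).choose t ≤ 2 * t * n.choose t := by
      calc Big.card * (K₂ + 1).choose t ≤ PT.card := hPTcard
        _ ≤ n.choose t * (2 * t) := hle
        _ = 2 * t * n.choose t := by ring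
    omega
  obtain ⟨T₀, hT₀m, hT₀⟩ := hfib
  rw [Finset.mem_powersetCard] at hT₀m
  set W := Big.filter (fun x => T₀ ⊆ nb x) with hW
  have hWcard : 2 * t < W.card := by
    have hle : (PT.filter (fun p => p.2 = T₀)).card ≤ W.card := by
      apply Finset.card_le_card_of_injOn (fun p => p.1)
      · rintro ⟨x, T⟩ hp
        simp only [Finset.mem_coe, Finset.mem_filter] at hp
        obtain ⟨hpPT, hpT⟩ := hp
        rw [hPT, Finset.mem_sigma] at hpPT
        simp only [Finset.mem_coe, hW, Finset.mem_filter]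
        refine ⟨hpPT.1, ?_⟩
        have := (Finset.mem_powersetCard.1 hpPT.2).1
        rwa [hpT] at this
      · rintro ⟨x, T⟩ hp ⟨x', T'⟩ hp' hxx
        simp only [Finset.mem_coe, Finset.mem_filter] at hp hp'
        simp only at hxx
        subst hxx
        rw [Sigma.mk.inj_iff]
        simp [hp.2, hp'.2]
    omega
  have hsd : t ≤ (W \ T₀).card := by
    have := Finset.le_card_sdiff T₀ W
    omega
  obtain ⟨S, hSsub, hScard⟩ := Finset.exists_subset_card_eq hsd
  refine ⟨S, T₀, hScard, hT₀m.2, Finset.disjoint_of_subset_left hSsub Finset.sdiff_disjoint, ?_⟩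
  intro x hx y hy
  have hxW : x ∈ W := (Finset.mem_sdiff.1 (hSsub hx)).1
  have : T₀ ⊆ nb x := (Finset.mem_filter.1 hxW).2
  have := this hy
  rw [hnb] at this
  exact (Finset.mem_filter.1 this).2

lemma sym2_exists_rep (z : Sym2 β) : ∃ u w, z = s(u, w) :=
  Sym2.ind (fun u w => ⟨u, w, rfl⟩) z

lemma assemble {β : Type} [Fintype β] (H' : SimpleGraph β) (hbip : H'.Colorable 2)
    (G : SimpleGraph (Finset (Fin n))) (A : Finset (Fin n)) (S U : Finset (Fin n))
    (hScard : Fintype.card β ≤ S.card) (hUcard : Fintype.card β ≤ U.card)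
    (hd : Disjoint S U) (hSne : S.Nonempty) (hUne : U.Nonempty)
    (hlam : ∀ x ∈ S, ∀ y ∈ U, lam G A x y) :
    ContainsCopy G (oneSubdivision H') := by
  classical
  obtain ⟨col⟩ := hbip
  -- embed the two color classes into S and U
  have hc0 : Fintype.card {b // col b = 0} ≤ Fintype.card {x // x ∈ S} := by
    rw [Fintype.card_coe]
    exact le_trans (Fintype.card_subtype_le _) hScard
  have hc1 : Fintype.card {b // ¬ col b = 0} ≤ Fintype.card {x // x ∈ U} := by
    rw [Fintype.card_coe]
    exact le_trans (Fintype.card_subtype_le _) hUcard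
  obtain ⟨e₀⟩ := Function.Embedding.nonempty_of_card_le hc0
  obtain ⟨e₁⟩ := Function.Embedding.nonempty_of_card_le hc1
  set m : β → Fin n := fun b => if h : col b = 0 then (e₀ ⟨b, h⟩ : Fin n) else (e₁ ⟨b, h⟩ : Fin n)
    with hm
  have hm0 : ∀ b, col b = 0 → m b ∈ S := by
    intro b h
    simp only [hm, dif_pos h]
    exact (e₀ ⟨b, h⟩).2
  have hm1 : ∀ b, ¬ col b = 0 → m b ∈ U := by
    intro b h
    simp only [hm, dif_neg h]
    exact (e₁ ⟨b, h⟩).2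
  have hmSU : ∀ b, m b ∈ S ∨ m b ∈ U := by
    intro b
    by_cases h : col b = 0
    · exact Or.inl (hm0 b h)
    · exact Or.inr (hm1 b h)
  have hmA : ∀ b, m b ∉ A := by
    intro b
    rcases hmSU b with h | h
    · obtain ⟨y, hy⟩ := hUne
      exact lam_not_mem_left (hlam _ h _ hy)
    · obtain ⟨x, hx⟩ := hSne
      exact lam_not_mem_right (hlam _ hx _ h)
  have hminj : Function.Injective m := by
    intro b b' hbb
    by_cases h : col b = 0 <;> by_cases h' : col b' = 0
    · simp only [hm, dif_pos h, dif_pos h'] at hbb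
      have := e₀.injective (Subtype.ext hbb)
      exact congrArg Subtype.val this
    · exact absurd (hbb ▸ hm0 b h : m b' ∈ S) (fun hin => Finset.disjoint_left.1 hd hin (hm1 b' h'))
    · exact absurd (hbb ▸ hm1 b h : m b' ∈ U) (fun hin => Finset.disjoint_left.1 hd (hm0 b' h') hin)
    · simp only [hm, dif_neg h, dif_neg h'] at hbb
      have := e₁.injective (Subtype.ext hbb)
      exact congrArg Subtype.val this
  have hcross : ∀ {b b'}, H'.Adj b b' → lam G A (m b) (m b') := by
    intro b b' hadj
    have hv : col b ≠ col b' := col.valid hadj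
    by_cases h0 : col b = 0
    · have h1 : ¬ col b' = 0 := fun e => hv (by rw [h0, e])
      exact hlam _ (hm0 b h0) _ (hm1 b' h1)
    · have h1 : col b' = 0 := by omega
      exact lam_symm (hlam _ (hm0 b' h1) _ (hm1 b h0))
  -- the subdivision vertices
  set sedge : H'.edgeSet → Finset (Fin n) := fun e =>
    Sym2.lift ⟨fun a b => insert (m a) (insert (m b) A),
      fun a b => Finset.insert_comm _ _ _⟩ e.val with hsedge
  have hsedge_eq : ∀ (e : H'.edgeSet) (u w : β), e.val = s(u, w) →
      sedge e = insert (m u) (insert (m w) A) := by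
    intro e u w hw
    rw [hsedge]
    simp only [hw, Sym2.lift_mk]
  have hcard1 : ∀ b, (insert (m b) A).card = A.card + 1 := by
    intro b
    exact Finset.card_insert_of_notMem (hmA b)
  have hadj_of : ∀ (e : H'.edgeSet) (u w : β), e.val = s(u, w) → H'.Adj u w := by
    intro e u w hw
    have := e.2
    rw [hw] at this
    exact this
  have hcard2 : ∀ (e : H'.edgeSet) (u w : β), e.val = s(u, w) →
      (insert (m u) (insert (m w) A)).card = A.card + 2 := by
    intro e u w hw
    have hadj := hadj_of e u w hw
    have hne : m u ≠ m w := fun h => hadj.ne (hminj h)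
    rw [Finset.card_insert_of_notMem, Finset.card_insert_of_notMem (hmA w)]
    intro hmem
    rcases Finset.mem_insert.1 hmem with h | h
    · exact hne h
    · exact hmA u h
  refine ⟨Sum.elim (fun b => insert (m b) A) sedge, ?_, ?_⟩
  · -- injectivity
    rintro (b | e) (b' | e') hpq
    · simp only [Sum.elim_inl] at hpq
      have : m b ∈ insert (m b') A := hpq ▸ Finset.mem_insert_self _ _
      rcases Finset.mem_insert.1 this with h | h
      · exact congrArg Sum.inl (hminj h)
      · exact absurd h (hmA b)
    · exfalso
      simp only [Sum.elim_inl, Sum.elim_inr] at hpq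
      obtain ⟨u, w, hw⟩ := sym2_exists_rep e'.val
      have := congrArg Finset.card hpq
      rw [hcard1 b, hsedge_eq e' u w hw, hcard2 e' u w hw] at this
      omega
    · exfalso
      simp only [Sum.elim_inl, Sum.elim_inr] at hpq
      obtain ⟨u, w, hw⟩ := sym2_exists_rep e.val
      have := congrArg Finset.card hpq
      rw [hcard1 b', hsedge_eq e u w hw, hcard2 e u w hw] at this
      omega
    · simp only [Sum.elim_inr] at hpq
      obtain ⟨u, w, hw⟩ := sym2_exists_rep e.val
      obtain ⟨u', w', hw'⟩ := sym2_exists_rep e'.val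
      rw [hsedge_eq e u w hw, hsedge_eq e' u' w' hw'] at hpq
      have hneuw : m u ≠ m w := fun h => (hadj_of e u w hw).ne (hminj h)
      have hneuw' : m u' ≠ m w' := fun h => (hadj_of e' u' w' hw').ne (hminj h)
      have hmu' : m u' = m u ∨ m u' = m w := by
        have : m u' ∈ insert (m u) (insert (m w) A) := hpq ▸ Finset.mem_insert_self _ _
        rcases Finset.mem_insert.1 this with h | h
        · exact Or.inl h
        · rcases Finset.mem_insert.1 h with h | h
          · exact Or.inr h
          · exact absurd h (hmA u')
      have hmw' : m w' = m u ∨ m w' = m w := by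
        have : m w' ∈ insert (m u) (insert (m w) A) := by
          rw [hpq]
          exact Finset.mem_insert_of_mem (Finset.mem_insert_self _ _)
        rcases Finset.mem_insert.1 this with h | h
        · exact Or.inl h
        · rcases Finset.mem_insert.1 h with h | h
          · exact Or.inr h
          · exact absurd h (hmA w')
      have hval : e.val = e'.val := by
        rw [hw, hw']
        rcases hmu' with h1 | h1 <;> rcases hmw' with h2 | h2
        · exact absurd (h1.trans h2.symm) hneuw'
        · rw [Sym2.eq_iff]
          exact Or.inl ⟨(hminj h1).symm, (hminj h2).symm⟩
        · rw [Sym2.eq_iff]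
          exact Or.inr ⟨(hminj h2).symm, (hminj h1).symm⟩
        · exact absurd (h1.trans h2.symm) hneuw'
      exact congrArg Sum.inr (Subtype.ext hval)
  · -- adjacency
    rintro (b | e) (b' | e') huv
    · rcases huv.2 with h | h <;> exact h.elim
    · -- inl, inr : b ∈ e'.val
      rcases huv.2 with h | h
      · obtain ⟨w, hw⟩ := Sym2.mem_iff_exists.1 h
        have hadj := hcross (hadj_of e' b w hw)
        simp only [Sum.elim_inl, Sum.elim_inr]
        rw [hsedge_eq e' b w hw]
        exact hadj.2.1
      · exact h.elim
    · rcases huv.2 with h | h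
      · exact h.elim
      · obtain ⟨w, hw⟩ := Sym2.mem_iff_exists.1 h
        have hadj := hcross (hadj_of e b' w hw)
        simp only [Sum.elim_inl, Sum.elim_inr]
        rw [hsedge_eq e b' w hw]
        exact hadj.2.1.symm
    · rcases huv.2 with h | h <;> exact h.elim


end ExOneSub

set_option maxHeartbeats 1600000 in
open ExOneSub in
/-- If `H'` is a bipartite graph whose 1-subdivision `H = T₁(H')` is cubical, then
`ex(Q_n, H) = o(n·2^{n-1})`: for every `c > 0` and all sufficiently large `n`, every
subgraph of `Q_n` with at least `c·n·2^{n-1}` edges contains a copy of `T₁(H')`. -/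
theorem ex_one_subdivision {β : Type} [Fintype β] (H' : SimpleGraph β)
    (hbip : H'.Colorable 2) (hcub : IsCubical (oneSubdivision H')) :
    ∀ c : ℝ, 0 < c → ∃ N : ℕ, ∀ n : ℕ, N ≤ n →
      ∀ G : SimpleGraph (Finset (Fin n)), G ≤ hypercube n →
        c * n * 2 ^ (n - 1) ≤ (numEdges G : ℝ) →
        ContainsCopy G (oneSubdivision H') := by
  intro c hc
  set c' : ℝ := min c 1 with hc'def
  have hc'pos : 0 < c' := lt_min hc one_pos
  have hc'le1 : c' ≤ 1 := min_le_right _ _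
  have hc'lec : c' ≤ c := min_le_left _ _
  set t : ℕ := Fintype.card β + 1 with ht
  set θ : ℝ := c' ^ 3 / 512 with hθ
  have hθpos : 0 < θ := by positivity
  refine ⟨⌈(16 : ℝ) / c'⌉₊ + ⌈8 * (t : ℝ) / θ⌉₊ +
    ⌈(2 * (t : ℝ) + 1) * 2 * 4 ^ t / θ ^ (t + 1)⌉₊ + t + 1, ?_⟩
  intro n hn G hG hE
  -- basic numeric consequences of `hn`
  have hn16 : (16 : ℝ) / c' ≤ n := by
    have h1 : ⌈(16 : ℝ) / c'⌉₊ ≤ n := by omega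
    exact (Nat.ceil_le.1 h1)
  have hn8t : 8 * (t : ℝ) / θ ≤ n := by
    have h1 : ⌈8 * (t : ℝ) / θ⌉₊ ≤ n := by omega
    exact (Nat.ceil_le.1 h1)
  have hn3 : (2 * (t : ℝ) + 1) * 2 * 4 ^ t / θ ^ (t + 1) ≤ n := by
    have h1 : ⌈(2 * (t : ℝ) + 1) * 2 * 4 ^ t / θ ^ (t + 1)⌉₊ ≤ n := by omega
    exact (Nat.ceil_le.1 h1)
  have hnt : t + 1 ≤ n := by omega
  have hn1 : 1 ≤ n := by omega
  have hnpos : (0 : ℝ) < n := by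
    have : (1 : ℝ) ≤ n := by exact_mod_cast hn1
    linarith
  -- the edge count
  have hE' : c' * n * 2 ^ (n - 1) ≤ ((G.edgeFinset.card : ℕ) : ℝ) := by
    rw [← numEdges_eq_card_edgeFinset G]
    calc c' * n * 2 ^ (n - 1) ≤ c * n * 2 ^ (n - 1) := by
          apply mul_le_mul_of_nonneg_right _ (by positivity)
          exact mul_le_mul_of_nonneg_right hc'lec (le_of_lt hnpos)
      _ ≤ _ := hE
  have hy : (2 : ℝ) ^ n = 2 ^ (n - 1) * 2 := by
    rw [← pow_succ]
    congr 1
    omega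
  -- Stage A : sum of down-degrees
  set dC : Finset (Fin n) → ℕ := fun C => (DD G C).card with hdC
  have hsum1 : G.edgeFinset.card ≤ ∑ C : Finset (Fin n), dC C :=
    card_edgeFinset_le_sum_DD G hG
  have hdsum : c' * n * 2 ^ (n - 1) ≤ ((∑ C : Finset (Fin n), dC C : ℕ) : ℝ) := by
    refine le_trans hE' ?_
    exact_mod_cast hsum1
  -- Stage B : many tops with large down-degree
  set K₁ : ℕ := ⌊c' * n / 8⌋₊ with hK₁
  set P : Finset (Finset (Fin n)) := Finset.univ.filter (fun C => K₁ < dC C) with hP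
  have hpig1 : ∑ C : Finset (Fin n), dC C ≤ P.card * n + 2 ^ n * K₁ := by
    have := sum_le_filter_bound dC n K₁ (fun C => by
      calc dC C ≤ C.card := Finset.card_le_card (Finset.filter_subset _ _)
        _ ≤ Fintype.card (Fin n) := Finset.card_le_univ C
        _ = n := Fintype.card_fin n)
    rwa [Fintype.card_finset, Fintype.card_fin] at this
  have hK₁u : (K₁ : ℝ) ≤ c' * n / 8 := Nat.floor_le (by positivity)
  have hK₁l : c' * n / 8 < (K₁ : ℝ) + 1 := Nat.lt_floor_add_one _
  have hc'n16 : (16 : ℝ) ≤ c' * n := by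
    rw [div_le_iff₀ hc'pos] at hn16
    linarith [hn16]
  have hK₁16 : c' * n / 16 ≤ (K₁ : ℝ) := by linarith
  have hPcard : 3 * c' * 2 ^ n / 8 ≤ (P.card : ℝ) := by
    have h2 : ((∑ C : Finset (Fin n), dC C : ℕ) : ℝ) ≤ (P.card : ℝ) * n + 2 ^ n * K₁ := by
      exact_mod_cast hpig1
    have h3 : c' * n * 2 ^ (n - 1) ≤ (P.card : ℝ) * n + 2 ^ n * (c' * n / 8) := by
      have : (2 : ℝ) ^ n * (K₁ : ℝ) ≤ 2 ^ n * (c' * n / 8) :=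
        mul_le_mul_of_nonneg_left hK₁u (by positivity)
      linarith
    have h4 : 3 * c' * 2 ^ n / 8 * n ≤ (P.card : ℝ) * n := by
      rw [hy] at h3
      nlinarith [h3]
    exact le_of_mul_le_mul_right h4 hnpos
  -- Stage C : sum of cherries
  set L : ℕ := ∑ C ∈ P, (DD G C).offDiag.card with hL
  have hL1 : P.card * ((K₁ + 1) * K₁) ≤ L := by
    rw [hL]
    have := Finset.card_nsmul_le_sum P (fun C => (DD G C).offDiag.card) ((K₁ + 1) * K₁)
      (fun C hC => by
        have hd : K₁ < dC C := (Finset.mem_filter.1 hC).2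
        show (K₁ + 1) * K₁ ≤ (DD G C).offDiag.card
        rw [Finset.offDiag_card]
        calc (K₁ + 1) * K₁ ≤ dC C * (dC C - 1) := Nat.mul_le_mul (by omega) (by omega)
          _ = dC C * dC C - dC C := by rw [Nat.mul_sub, mul_one]
          _ = (DD G C).card * (DD G C).card - (DD G C).card := rfl)
    simpa [smul_eq_mul] using this
  have hL2 : θ * n ^ 2 * 2 ^ n ≤ (L : ℝ) := by
    have hcast : ((P.card * ((K₁ + 1) * K₁) : ℕ) : ℝ) ≤ (L : ℝ) := by exact_mod_cast hL1
    push_cast at hcast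
    have hK₁l' : c' * n / 8 ≤ (K₁ : ℝ) + 1 := le_of_lt hK₁l
    have hmono : (3 * c' * 2 ^ n / 8) * ((c' * n / 8) * (c' * n / 16)) ≤
        (P.card : ℝ) * (((K₁ : ℝ) + 1) * (K₁ : ℝ)) := by
      apply mul_le_mul hPcard _ (by positivity) (by positivity)
      apply mul_le_mul hK₁l' hK₁16 (by positivity)
      linarith
    have hidθ : (3 * c' * 2 ^ n / 8) * ((c' * n / 8) * (c' * n / 16)) =
        (3 * c' ^ 3 / 1024) * n ^ 2 * 2 ^ n := by ring
    have hθle : θ * n ^ 2 * 2 ^ n ≤ (3 * c' ^ 3 / 1024) * n ^ 2 * 2 ^ n := by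
      apply mul_le_mul_of_nonneg_right _ (by positivity)
      apply mul_le_mul_of_nonneg_right _ (by positivity)
      rw [hθ]
      nlinarith [pow_pos hc'pos 3]
    calc θ * n ^ 2 * 2 ^ n ≤ (3 * c' ^ 3 / 1024) * n ^ 2 * 2 ^ n := hθle
      _ = (3 * c' * 2 ^ n / 8) * ((c' * n / 8) * (c' * n / 16)) := hidθ.symm
      _ ≤ (P.card : ℝ) * (((K₁ : ℝ) + 1) * (K₁ : ℝ)) := hmono
      _ ≤ (L : ℝ) := hcast
  -- Stage D : a good base set A
  have hLlam : (L : ℕ) ≤ ∑ A : Finset (Fin n), (lamPairs G A).card := by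
    calc L ≤ ∑ C : Finset (Fin n), (DD G C).offDiag.card :=
        Finset.sum_le_sum_of_subset (Finset.filter_subset _ _)
      _ ≤ _ := sum_offDiag_le_sum_lamPairs G
  have hexA : ∃ A : Finset (Fin n), θ * n ^ 2 ≤ ((lamPairs G A).card : ℝ) := by
    by_contra hcon
    push_neg at hcon
    have hlt : ∑ A : Finset (Fin n), ((lamPairs G A).card : ℝ) <
        ∑ _A : Finset (Fin n), θ * n ^ 2 :=
      Finset.sum_lt_sum_of_nonempty Finset.univ_nonempty (fun A _ => hcon A)
    rw [Finset.sum_const, Finset.card_univ, Fintype.card_finset, Fintype.card_fin] at hlt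
    have h1 : ((L : ℕ) : ℝ) ≤ ∑ A : Finset (Fin n), ((lamPairs G A).card : ℝ) := by
      push_cast
      exact_mod_cast hLlam
    have h2 : (2 ^ n : ℕ) • (θ * n ^ 2) = θ * n ^ 2 * 2 ^ n := by
      rw [nsmul_eq_mul]
      push_cast
      ring
    rw [h2] at hlt
    linarith
  obtain ⟨A, hA⟩ := hexA
  -- Stage E : KST on the support relation
  have hdegsum : θ * n ^ 2 ≤ ((∑ x : Fin n, (nbr G A x).card : ℕ) : ℝ) := by
    refine le_trans hA ?_
    exact_mod_cast lamPairs_card_le_sum_nbr G A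
  set K₂ : ℕ := ⌊θ * n / 2⌋₊ with hK₂
  set Big : Finset (Fin n) := Finset.univ.filter (fun x => K₂ < (nbr G A x).card) with hBig
  have hpig2 : ∑ x : Fin n, (nbr G A x).card ≤ Big.card * n + n * K₂ := by
    have := sum_le_filter_bound (fun x => (nbr G A x).card) n K₂ (fun x => by
      calc (nbr G A x).card ≤ Fintype.card (Fin n) := Finset.card_le_univ _
        _ = n := Fintype.card_fin n)
    rwa [Fintype.card_fin] at this
  have hK₂u : (K₂ : ℝ) ≤ θ * n / 2 := Nat.floor_le (by positivity)
  have hK₂l : θ * n / 2 < (K₂ : ℝ) + 1 := Nat.lt_floor_add_one _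
  have hBigcard : θ * n / 2 ≤ (Big.card : ℝ) := by
    have h2 : ((∑ x : Fin n, (nbr G A x).card : ℕ) : ℝ) ≤ (Big.card : ℝ) * n + n * K₂ := by
      exact_mod_cast hpig2
    have h3 : θ * n ^ 2 ≤ (Big.card : ℝ) * n + n * (θ * n / 2) := by
      have : (n : ℝ) * (K₂ : ℝ) ≤ n * (θ * n / 2) :=
        mul_le_mul_of_nonneg_left hK₂u (le_of_lt hnpos)
      linarith
    have h4 : (θ * n / 2) * n ≤ (Big.card : ℝ) * n := by nlinarith
    exact le_of_mul_le_mul_right h4 hnpos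
  have hθn8t : 8 * (t : ℝ) ≤ θ * n := by
    rw [div_le_iff₀ hθpos] at hn8t
    linarith
  have htK₂ : t ≤ K₂ + 2 := by
    have h1 : (t : ℝ) ≤ θ * n / 8 := by linarith
    have h2 : (t : ℝ) < (K₂ : ℝ) + 1 := by linarith
    have : t < K₂ + 1 := by exact_mod_cast h2
    omega
  have hcastK₂ : θ * n / 4 ≤ ((K₂ + 2 - t : ℕ) : ℝ) := by
    have h1 : (t : ℝ) ≤ θ * n / 8 := by linarith
    rw [Nat.cast_sub htK₂]
    have h2 : ((K₂ + 2 : ℕ) : ℝ) = (K₂ : ℝ) + 2 := by push_cast; ring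
    rw [h2]
    linarith
  -- the key inequality, in ℝ then ℕ
  have hfact : 2 * (t : ℝ) + 1 ≤ (θ / 2) * (θ / 4) ^ t * n := by
    rw [div_le_iff₀ (by positivity : (0 : ℝ) < θ ^ (t + 1))] at hn3
    have hid : (θ / 2) * (θ / 4) ^ t * n = n * θ ^ (t + 1) / (2 * 4 ^ t) := by
      rw [div_pow, pow_succ]
      field_simp
      ring
    rw [hid, le_div_iff₀ (by positivity)]
    linarith
  have hkey : (2 * t + 1) * n ^ t ≤ Big.card * (K₂ + 2 - t) ^ t := by
    have hreal : (2 * (t : ℝ) + 1) * (n : ℝ) ^ t ≤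
        (Big.card : ℝ) * ((K₂ + 2 - t : ℕ) : ℝ) ^ t := by
      calc (2 * (t : ℝ) + 1) * (n : ℝ) ^ t ≤ ((θ / 2) * (θ / 4) ^ t * n) * n ^ t :=
            mul_le_mul_of_nonneg_right hfact (by positivity)
        _ = (θ * n / 2) * (θ * n / 4) ^ t := by
            rw [show θ * (n : ℝ) / 4 = (θ / 4) * (n : ℝ) by ring, mul_pow,
              show θ * (n : ℝ) / 2 = (θ / 2) * (n : ℝ) by ring]
            ring
        _ ≤ (Big.card : ℝ) * ((K₂ + 2 - t : ℕ) : ℝ) ^ t := by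
            apply mul_le_mul hBigcard _ (by positivity) (by positivity)
            exact pow_le_pow_left₀ (by positivity) hcastK₂ t
    exact_mod_cast hreal
  have hnat1 : (2 * t + 1) * Nat.descFactorial n t ≤ (2 * t + 1) * n ^ t :=
    Nat.mul_le_mul_left _ (Nat.descFactorial_le_pow n t)
  have hnat2 : (K₂ + 2 - t) ^ t ≤ Nat.descFactorial (K₂ + 1) t := by
    have := pow_le_descFactorial t (K₂ + 1)
    simpa using this
  have hchain : (2 * t + 1) * Nat.descFactorial n t ≤
      Big.card * Nat.descFactorial (K₂ + 1) t := by
    calc (2 * t + 1) * Nat.descFactorial n t ≤ (2 * t + 1) * n ^ t := hnat1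
      _ ≤ Big.card * (K₂ + 2 - t) ^ t := hkey
      _ ≤ Big.card * Nat.descFactorial (K₂ + 1) t := Nat.mul_le_mul_left _ hnat2
  rw [Nat.descFactorial_eq_factorial_mul_choose n t,
    Nat.descFactorial_eq_factorial_mul_choose (K₂ + 1) t] at hchain
  have hchain2 : t.factorial * ((2 * t + 1) * n.choose t) ≤
      t.factorial * (Big.card * (K₂ + 1).choose t) := by
    calc t.factorial * ((2 * t + 1) * n.choose t)
        = (2 * t + 1) * (t.factorial * n.choose t) := by ring
      _ ≤ Big.card * (t.factorial * (K₂ + 1).choose t) := hchain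
      _ = t.factorial * (Big.card * (K₂ + 1).choose t) := by ring
  have hfin : (2 * t + 1) * n.choose t ≤ Big.card * (K₂ + 1).choose t :=
    Nat.le_of_mul_le_mul_left hchain2 (Nat.factorial_pos t)
  have hchpos : 0 < n.choose t := Nat.choose_pos (by omega)
  have hstrict : 2 * t * n.choose t <
      (Finset.univ.filter
        (fun x => K₂ < (Finset.univ.filter (fun y => lam G A x y)).card)).card *
        (K₂ + 1).choose t := by
    have : (Finset.univ.filter
        (fun x => K₂ < (Finset.univ.filter (fun y => lam G A x y)).card)).card = Big.card := rfl
    rw [this]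
    have : 2 * t * n.choose t < (2 * t + 1) * n.choose t := by
      have := hchpos
      nlinarith
    omega
  obtain ⟨S, U, hScard, hUcard, hd, hcross⟩ := kst_aux (lam G A) t K₂ hstrict
  -- Stage F : assemble the copy
  apply assemble H' hbip G A S U
  · rw [hScard]; omega
  · rw [hUcard]; omega
  · exact hd
  · rw [← Finset.card_pos, hScard]; omega
  · rw [← Finset.card_pos, hUcard]; omega
  · exact hcross
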